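/- Let M be a topological space, f : M → M a homeomorphism, and k ≥ 1 a natural number. Then the map T(f^k) → T(f) between mapping tori induced by (x, t) ↦ (x, k·t) is well defined and is a covering map, each of whose fibers has cardinality exactly k. (In particular, the mapping torus of f is finitely covered by the mapping torus of f^k for every k ≥ 1.) -/

import Mathlib

/-- Self-homeomorphisms of a space form a group under composition, so that `f ^ n` makes
sense for `n : ℤ` (or `n : ℕ`). -/
instance Homeomorph.instGroupSelf {M : Type*} [TopologicalSpace M] : Group (M ≃ₜ M) where
  mul f g := g.trans f
  one := Homeomorph.refl M
  inv := Homeomorph.symm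
  mul_assoc f g h := Homeomorph.ext fun _ => rfl
  one_mul f := Homeomorph.ext fun _ => rfl
  mul_one f := Homeomorph.ext fun _ => rfl
  inv_mul_cancel f := Homeomorph.ext fun x => f.symm_apply_apply x

/-- The mapping torus `T(f)` of a self-homeomorphism `f` of a topological space `M`: the
quotient of `M × ℝ` (with the product topology) by the `ℤ`-action `n • (x, t) = (fⁿ x, t - n)`,
endowed with the quotient topology. -/
def MappingTorus {M : Type*} [TopologicalSpace M] (f : M ≃ₜ M) : Type _ :=
  Quot (fun p q : M × ℝ => ∃ n : ℤ, q = ((f ^ n) p.1, p.2 - n))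

instance {M : Type*} [TopologicalSpace M] (f : M ≃ₜ M) : TopologicalSpace (MappingTorus f) :=
  inferInstanceAs (TopologicalSpace (Quot _))

namespace MT9
open Topology

variable {M : Type*} [TopologicalSpace M] (f : M ≃ₜ M)

abbrev R : M × ℝ → M × ℝ → Prop := fun p q => ∃ n : ℤ, q = ((f ^ n) p.1, p.2 - n)

lemma mul_apply (a b : M ≃ₜ M) (x : M) : (a * b) x = a (b x) := rfl
lemma one_apply (x : M) : (1 : M ≃ₜ M) x = x := rfl
lemma zpow_apply_add (m n : ℤ) (x : M) : (f ^ (m + n)) x = (f ^ m) ((f ^ n) x) := by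
  rw [zpow_add]; rfl

lemma req : Equivalence (R f) := by
  constructor
  · exact fun p => ⟨0, by simp [one_apply]⟩
  · rintro p q ⟨n, rfl⟩
    refine ⟨-n, ?_⟩
    have h1 : (f ^ (-n)) ((f ^ n) p.1) = p.1 := by
      rw [← zpow_apply_add]; simp [one_apply]
    refine Prod.ext ?_ ?_
    · exact h1.symm
    · simp
  · rintro p q r ⟨m, rfl⟩ ⟨n, rfl⟩
    refine ⟨m + n, Prod.ext ?_ ?_⟩
    · show (f ^ n) ((f ^ m) p.1) = (f ^ (m + n)) p.1
      rw [add_comm, zpow_apply_add]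
    · show p.2 - ↑m - ↑n = p.2 - ↑(m + n)
      push_cast; ring

lemma mk_eq {p q : M × ℝ} : (Quot.mk (R f) p = Quot.mk (R f) q) ↔ R f p q := by
  rw [Quot.eq]
  exact Equivalence.eqvGen_iff (req f)

def pi : M × ℝ → MappingTorus f := Quot.mk _

lemma pi_eq_iff {p q : M × ℝ} : pi f p = pi f q ↔ ∃ n : ℤ, q = ((f ^ n) p.1, p.2 - n) :=
  mk_eq f

lemma continuous_pi : Continuous (pi f) := continuous_quot_mk

/-- The deck transformation by `n`. -/
def act (n : ℤ) : (M × ℝ) ≃ₜ (M × ℝ) := (f ^ n).prodCongr (Homeomorph.addRight (-(n : ℝ)))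

lemma act_apply (n : ℤ) (p : M × ℝ) : act f n p = ((f ^ n) p.1, p.2 - n) := by
  show ((f ^ n) p.1, p.2 + -(n : ℝ)) = _
  rw [← sub_eq_add_neg]

lemma isQuotientMap_pi : IsQuotientMap (pi f) := isQuotientMap_quot_mk

lemma isOpenMap_pi : IsOpenMap (pi f) := by
  intro W hW
  rw [← (isQuotientMap_pi f).isOpen_preimage]
  have : pi f ⁻¹' (pi f '' W) = ⋃ n : ℤ, act f n '' W := by
    ext p
    simp only [Set.mem_preimage, Set.mem_image, Set.mem_iUnion]
    constructor
    · rintro ⟨w, hw, hpw⟩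
      obtain ⟨n, rfl⟩ := (pi_eq_iff f).mp hpw
      exact ⟨n, w, hw, (act_apply f n w).symm⟩
    · rintro ⟨n, w, hw, rfl⟩
      refine ⟨w, hw, ?_⟩
      rw [act_apply]
      exact (pi_eq_iff f).mpr ⟨n, rfl⟩
  rw [this]
  exact isOpen_iUnion fun n => (act f n).isOpenMap W hW

/-- Time coordinate modulo 1. -/
noncomputable def tau : MappingTorus f → AddCircle (1 : ℝ) :=
  Quot.lift (fun p => (p.2 : AddCircle (1 : ℝ))) (by
    rintro p q ⟨n, rfl⟩
    show (p.2 : AddCircle (1 : ℝ)) = ((p.2 - (n : ℝ) : ℝ) : AddCircle (1 : ℝ))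
    rw [QuotientAddGroup.eq]
    refine AddSubgroup.mem_zmultiples_iff.mpr ⟨-n, ?_⟩
    simp [zsmul_eq_mul]
    ring)

lemma continuous_tau : Continuous (tau f) :=
  continuous_quot_lift _ ((AddCircle.continuous_mk' 1).comp continuous_snd)

lemma tau_pi (p : M × ℝ) : tau f (pi f p) = (p.2 : AddCircle (1 : ℝ)) := rfl

lemma coe_eq_coe_iff {a b : ℝ} :
    (a : AddCircle (1 : ℝ)) = (b : AddCircle (1 : ℝ)) ↔ ∃ n : ℤ, b - a = n := by
  rw [QuotientAddGroup.eq]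
  constructor
  · rintro h
    obtain ⟨n, hn⟩ := AddSubgroup.mem_zmultiples_iff.mp h
    refine ⟨n, ?_⟩
    simp [zsmul_eq_mul] at hn
    linarith
  · rintro ⟨n, hn⟩
    refine AddSubgroup.mem_zmultiples_iff.mpr ⟨n, ?_⟩
    simp [zsmul_eq_mul]
    linarith

variable (k : ℕ)

/-- The covering map `T(f^k) → T(f)`. -/
def Fk : MappingTorus (f ^ k) → MappingTorus f :=
  Quot.lift (fun p => pi f (p.1, (k : ℝ) * p.2)) (by
    rintro p q ⟨n, rfl⟩
    apply Quot.sound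
    refine ⟨(k : ℤ) * n, Prod.ext ?_ ?_⟩
    · show ((f ^ k) ^ n) p.1 = (f ^ ((k : ℤ) * n)) p.1
      rw [zpow_mul, zpow_natCast]
    · show (k : ℝ) * (p.2 - n) = (k : ℝ) * p.2 - ((k : ℤ) * n : ℤ)
      push_cast; ring)

lemma Fk_pi (p : M × ℝ) : Fk f k (pi (f ^ k) p) = pi f (p.1, (k : ℝ) * p.2) := rfl

lemma continuous_Fk : Continuous (Fk f k) :=
  continuous_quot_lift _ ((continuous_pi f).comp (by fun_prop))

variable (c : ℝ)

def J : Set ℝ := Set.Ioo (c - 2⁻¹) (c + 2⁻¹)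

def A : Set (AddCircle (1 : ℝ)) := ((↑) : ℝ → AddCircle (1 : ℝ)) '' J c

def U : Set (MappingTorus f) := tau f ⁻¹' A c

lemma isOpen_U : IsOpen (U f c) :=
  (continuous_tau f).isOpen_preimage _ (QuotientAddGroup.isOpenMap_coe _ isOpen_Ioo)

lemma mem_U_iff {x : M} {t : ℝ} : pi f (x, t) ∈ U f c ↔ ∃ n : ℤ, t - n ∈ J c := by
  show (t : AddCircle (1 : ℝ)) ∈ A c ↔ _
  constructor
  · rintro ⟨s, hs, hst⟩
    obtain ⟨n, hn⟩ := (coe_eq_coe_iff).mp hst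
    refine ⟨n, ?_⟩
    have h : t - n = s := by linarith
    rw [h]; exact hs
  · rintro ⟨n, hn⟩
    exact ⟨t - n, hn, (coe_eq_coe_iff).mpr ⟨n, by ring⟩⟩

/-- window uniqueness : two reps with time in a length-1 window coincide -/
lemma unique_rep {x x' : M} {s s' : ℝ} (hs : s ∈ Set.Ico (c - 2⁻¹) (c + 2⁻¹))
    (hs' : s' ∈ Set.Ico (c - 2⁻¹) (c + 2⁻¹)) (h : pi f (x, s) = pi f (x', s')) :
    x = x' ∧ s = s' := by
  obtain ⟨n, hn⟩ := (pi_eq_iff f).mp h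
  have h2 : s' = s - n := congrArg Prod.snd hn
  have hn0 : n = 0 := by
    have hb : -1 < (n : ℝ) ∧ (n : ℝ) < 1 := by
      obtain ⟨a1, a2⟩ := hs; obtain ⟨b1, b2⟩ := hs'
      constructor <;> [nlinarith; nlinarith]
    exact_mod_cast by
      have := hb.1; have := hb.2
      have : -1 < (n:ℝ) ∧ (n:ℝ) < 1 := hb
      exact_mod_cast show n = 0 by
        have h1 : (-1 : ℤ) < n := by exact_mod_cast hb.1
        have h2 : n < 1 := by exact_mod_cast hb.2
        omega
  subst hn0
  have h1 : x' = (f ^ (0:ℤ)) x := congrArg Prod.fst hn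
  refine ⟨?_, by rw [h2]; simp⟩
  rw [h1]; simp [one_apply]

/-- canonical local section of `pi f` with time in `[c - 1/2, c + 1/2)`. -/
noncomputable def sec : MappingTorus f → M × ℝ := fun y =>
  ((f ^ ⌊(Quot.out y).2 - c + 2⁻¹⌋) (Quot.out y).1,
    (Quot.out y).2 - ⌊(Quot.out y).2 - c + 2⁻¹⌋)

lemma pi_sec (y : MappingTorus f) : pi f (sec f c y) = y := by
  conv_rhs => rw [← Quot.out_eq y]
  exact ((pi_eq_iff f).mpr ⟨_, rfl⟩).symm

lemma sec_snd_mem (y : MappingTorus f) :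
    (sec f c y).2 ∈ Set.Ico (c - 2⁻¹) (c + 2⁻¹) := by
  set t := (Quot.out y).2
  have h1 := Int.floor_le (t - c + 2⁻¹)
  have h2 := Int.lt_floor_add_one (t - c + 2⁻¹)
  constructor <;> [skip; skip] <;> simp only [sec] <;> [linarith; linarith]

lemma sec_mem_J {y : MappingTorus f} (hy : y ∈ U f c) : (sec f c y).2 ∈ J c := by
  have hmem := sec_snd_mem f c y
  have hy' : pi f ((sec f c y).1, (sec f c y).2) ∈ U f c := by
    rw [pi_sec f c y]; exact hy
  obtain ⟨n, hn⟩ := (mem_U_iff f c).mp hy'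
  have hn0 : n = 0 := by
    obtain ⟨a1, a2⟩ := hn
    obtain ⟨b1, b2⟩ := hmem
    have h1 : (-1 : ℤ) < n := by exact_mod_cast show (-1 : ℝ) < n by nlinarith
    have h2 : n < 1 := by exact_mod_cast show (n : ℝ) < 1 by nlinarith
    omega
  subst hn0
  simpa using hn

lemma sec_eq {y : MappingTorus f} (hy : y ∈ U f c) {w : M × ℝ} (hw : w.2 ∈ J c)
    (hwy : pi f w = y) : sec f c y = w := by
  have h := unique_rep f c
    (Set.mem_of_mem_of_subset (sec_mem_J f c hy) Set.Ioo_subset_Ico_self)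
    (Set.mem_of_mem_of_subset hw Set.Ioo_subset_Ico_self)
    (by rw [pi_sec f c y, ← hwy])
  exact Prod.ext h.1 h.2

lemma continuousOn_sec : ContinuousOn (sec f c) (U f c) := by
  rw [continuousOn_iff']
  intro V hV
  refine ⟨pi f '' (V ∩ (Set.univ ×ˢ J c)), isOpenMap_pi f _ (hV.inter
    (isOpen_univ.prod isOpen_Ioo)), ?_⟩
  ext y
  simp only [Set.mem_inter_iff, Set.mem_preimage, Set.mem_image]
  constructor
  · rintro ⟨hV', hy⟩
    exact ⟨⟨sec f c y, ⟨hV', ⟨trivial, sec_mem_J f c hy⟩⟩, pi_sec f c y⟩, hy⟩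
  · rintro ⟨⟨w, ⟨hwV, _, hwJ⟩, hwy⟩, hy⟩
    exact ⟨by rw [sec_eq f c hy hwJ hwy]; exact hwV, hy⟩

/-- The sheet number modulo `k`. -/
noncomputable def sheet : MappingTorus (f ^ k) → ZMod k :=
  Quot.lift (fun p => ((⌊(k : ℝ) * p.2 - c + 2⁻¹⌋ : ℤ) : ZMod k)) (by
    rintro p q ⟨n, rfl⟩
    show ((⌊(k : ℝ) * p.2 - c + 2⁻¹⌋ : ℤ) : ZMod k) =
      ((⌊(k : ℝ) * (p.2 - n) - c + 2⁻¹⌋ : ℤ) : ZMod k)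
    have h : (k : ℝ) * (p.2 - n) - c + 2⁻¹ = ((k : ℝ) * p.2 - c + 2⁻¹) - ((k * n : ℤ) : ℝ) := by
      push_cast; ring
    rw [h, Int.floor_sub_intCast]
    push_cast
    simp)

lemma sheet_pi (p : M × ℝ) :
    sheet f k c (pi (f ^ k) p) = ((⌊(k : ℝ) * p.2 - c + 2⁻¹⌋ : ℤ) : ZMod k) := rfl

lemma floor_eq_of_window {t : ℝ} {n : ℤ} (h : t - n ∈ J c) : ⌊t - c + 2⁻¹⌋ = n := by
  obtain ⟨h1, h2⟩ := h
  rw [Int.floor_eq_iff]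
  constructor <;> [skip; skip] <;> push_cast <;> [linarith; linarith]

/-- The inverse image formula for `Fk`. -/
lemma Fk_section (x : M) (s : ℝ) (n : ℤ) (hk : (k : ℝ) ≠ 0) :
    Fk f k (pi (f ^ k) ((f ^ (-n)) x, (s + n) / k)) = pi f (x, s) := by
  rw [Fk_pi]
  have h : (k : ℝ) * ((s + n) / k) = s + n := by field_simp
  rw [h]
  refine (pi_eq_iff f).mpr ⟨n, Prod.ext ?_ ?_⟩
  · show x = (f ^ n) ((f ^ (-n)) x)
    rw [← zpow_apply_add]; simp [one_apply]
  · show s = s + n - n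
    ring

lemma sheet_section (x : M) (s : ℝ) (n : ℤ) (hk : (k : ℝ) ≠ 0) (hs : s ∈ J c) :
    sheet f k c (pi (f ^ k) ((f ^ (-n)) x, (s + n) / k)) = (n : ZMod k) := by
  rw [sheet_pi]
  have h : (k : ℝ) * ((s + n) / k) = s + n := by field_simp
  rw [h]
  have h2 : s + n - n ∈ J c := by simpa using hs
  rw [floor_eq_of_window c h2]

lemma isOpen_sheet_piece (j : ZMod k) :
    IsOpen (Fk f k ⁻¹' U f c ∩ sheet f k c ⁻¹' {j}) := by
  rw [← (isQuotientMap_pi (f ^ k)).isOpen_preimage]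
  have key : pi (f ^ k) ⁻¹' (Fk f k ⁻¹' U f c ∩ sheet f k c ⁻¹' {j}) =
      (fun p : M × ℝ => (k : ℝ) * p.2) ⁻¹'
        (⋃ (n : ℤ) (_ : (n : ZMod k) = j), Set.Ioo (c - 2⁻¹ + n) (c + 2⁻¹ + n)) := by
    ext p
    simp only [Set.mem_preimage, Set.mem_inter_iff, Set.mem_singleton_iff, Set.mem_iUnion]
    rw [show Fk f k (pi (f ^ k) p) = pi f (p.1, (k : ℝ) * p.2) from rfl, mem_U_iff, sheet_pi]
    constructor
    · rintro ⟨⟨n, hn⟩, hj⟩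
      have hfl : ⌊(k : ℝ) * p.2 - c + 2⁻¹⌋ = n := floor_eq_of_window c hn
      refine ⟨n, by rw [← hfl]; exact hj, ?_, ?_⟩
      · obtain ⟨h1, -⟩ := hn; linarith
      · obtain ⟨-, h2⟩ := hn; linarith
    · rintro ⟨n, hnj, h1, h2⟩
      have hJ : (k : ℝ) * p.2 - n ∈ J c := ⟨by linarith, by linarith⟩
      have hfl : ⌊(k : ℝ) * p.2 - c + 2⁻¹⌋ = n := floor_eq_of_window c hJ
      exact ⟨⟨n, hJ⟩, by rw [hfl]; exact hnj⟩
  rw [key]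
  exact (continuous_const.mul continuous_snd).isOpen_preimage _
    (isOpen_iUnion fun n => isOpen_iUnion fun _ => isOpen_Ioo)

variable [NeZero k]

lemma kR_ne_zero : (k : ℝ) ≠ 0 := Nat.cast_ne_zero.mpr (NeZero.ne k)

lemma val_cast_int (n : ℤ) : (((ZMod.val ((n : ZMod k))) : ℤ) : ZMod k) = (n : ZMod k) := by
  rw [Int.cast_natCast]
  exact ZMod.natCast_rightInverse _

lemma val_cast_int' (j : ZMod k) : (((ZMod.val j) : ℤ) : ZMod k) = j := by
  rw [Int.cast_natCast]
  exact ZMod.natCast_rightInverse _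

/-- The local trivialization of `Fk` over the window centered at `c`. -/
noncomputable def phom : OpenPartialHomeomorph (MappingTorus (f ^ k)) (MappingTorus f × ZMod k) where
  toFun e := (Fk f k e, sheet f k c e)
  invFun p := pi (f ^ k)
    ((f ^ (-(ZMod.val p.2 : ℤ))) (sec f c p.1).1,
      ((sec f c p.1).2 + ((ZMod.val p.2 : ℤ) : ℝ)) / k)
  source := Fk f k ⁻¹' U f c
  target := U f c ×ˢ Set.univ
  map_source' e he := ⟨he, trivial⟩
  map_target' := by
    rintro ⟨y, j⟩ ⟨hy, -⟩
    show Fk f k _ ∈ U f c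
    dsimp only
    rw [Fk_section f k _ _ _ (kR_ne_zero k),
      show ((sec f c y).1, (sec f c y).2) = sec f c y from rfl, pi_sec]
    exact hy
  left_inv' := by
    intro e he
    obtain ⟨p, rfl⟩ := (isQuotientMap_pi (f ^ k)).surjective e
    have hU : pi f (p.1, (k : ℝ) * p.2) ∈ U f c := he
    set n := ⌊(k : ℝ) * p.2 - c + 2⁻¹⌋ with hn
    have hJn : (k : ℝ) * p.2 - n ∈ J c := by
      obtain ⟨m, hm⟩ := (mem_U_iff f c).mp hU
      rwa [hn, floor_eq_of_window c hm]
    have hsec : sec f c (Fk f k (pi (f ^ k) p)) = ((f ^ n) p.1, (k : ℝ) * p.2 - n) := by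
      refine sec_eq f c (by rwa [Fk_pi]) hJn ?_
      rw [Fk_pi]
      exact ((pi_eq_iff f (p := (p.1, (k : ℝ) * p.2))
        (q := ((f ^ n) p.1, (k : ℝ) * p.2 - n))).mpr ⟨n, rfl⟩).symm
    beta_reduce
    rw [sheet_pi, hsec]
    set v := (ZMod.val ((n : ZMod k)) : ℤ) with hv
    have h2 : (k : ℤ) ∣ n - v := by
      refine (ZMod.intCast_zmod_eq_zero_iff_dvd (n - v) k).mp ?_
      rw [Int.cast_sub, hv, val_cast_int, sub_self]
    obtain ⟨m, hm⟩ := h2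
    refine ((pi_eq_iff (f ^ k)).mpr ⟨m, Prod.ext ?_ ?_⟩).symm
    · show (f ^ (-v)) ((f ^ n) p.1) = ((f ^ k) ^ m) p.1
      rw [← zpow_apply_add]
      have hexp : -v + n = (k : ℤ) * m := by omega
      rw [hexp, zpow_mul, zpow_natCast]
    · show ((k : ℝ) * p.2 - n + v) / k = p.2 - m
      have hmr : (n : ℝ) - v = k * m := by exact_mod_cast hm
      have hk0 : (k : ℝ) ≠ 0 := kR_ne_zero k
      field_simp
      linarith
  right_inv' := by
    rintro ⟨y, j⟩ ⟨hy, -⟩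
    have hfst : Fk f k (pi (f ^ k)
        ((f ^ (-(ZMod.val j : ℤ))) (sec f c y).1,
          ((sec f c y).2 + ((ZMod.val j : ℤ) : ℝ)) / k)) = y := by
      rw [Fk_section f k _ _ _ (kR_ne_zero k),
        show ((sec f c y).1, (sec f c y).2) = sec f c y from rfl, pi_sec]
    refine Prod.ext hfst ?_
    show sheet f k c (pi (f ^ k)
        ((f ^ (-(ZMod.val j : ℤ))) (sec f c y).1,
          ((sec f c y).2 + ((ZMod.val j : ℤ) : ℝ)) / k)) = j
    rw [sheet_section f k c _ _ _ (kR_ne_zero k) (sec_mem_J f c hy)]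
    rw [Int.cast_natCast]
    exact ZMod.natCast_rightInverse _
  open_source := (continuous_Fk f k).isOpen_preimage _ (isOpen_U f c)
  open_target := (isOpen_U f c).prod isOpen_univ
  continuousOn_toFun := by
    refine fun e he => ContinuousAt.continuousWithinAt ?_
    refine ContinuousAt.prodMk ((continuous_Fk f k).continuousAt) ?_
    refine Filter.EventuallyEq.continuousAt (y := sheet f k c e) ?_
    filter_upwards [(isOpen_sheet_piece f k c (sheet f k c e)).mem_nhds ⟨he, rfl⟩] with a ha
    exact ha.2
  continuousOn_invFun := by
    rintro ⟨y, j⟩ ⟨hy, -⟩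
    have hsec : ContinuousWithinAt (fun p : MappingTorus f × ZMod k => sec f c p.1)
        (U f c ×ˢ Set.univ) (y, j) := by
      refine (continuousOn_sec f c y hy).comp (f := Prod.fst) (x := (y, j)) continuous_fst.continuousWithinAt ?_
      exact fun p hp => hp.1
    have houter : Continuous (fun w : M × ℝ =>
        pi (f ^ k) ((f ^ (-(ZMod.val j : ℤ))) w.1, (w.2 + ((ZMod.val j : ℤ) : ℝ)) / k)) := by
      refine (continuous_pi (f ^ k)).comp ?_
      exact ((f ^ (-(ZMod.val j : ℤ))).continuous.comp continuous_fst).prodMk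
        (by fun_prop)
    have hG : ContinuousWithinAt (fun p : MappingTorus f × ZMod k =>
        pi (f ^ k) ((f ^ (-(ZMod.val j : ℤ))) (sec f c p.1).1,
          ((sec f c p.1).2 + ((ZMod.val j : ℤ) : ℝ)) / k))
        (U f c ×ˢ Set.univ) (y, j) := houter.continuousAt.comp_continuousWithinAt hsec
    refine hG.congr_of_eventuallyEq ?_ rfl
    have hO : (Prod.snd ⁻¹' {j} : Set (MappingTorus f × ZMod k)) ∈ nhds (y, j) :=
      (continuous_snd.isOpen_preimage _ (isOpen_discrete _)).mem_nhds rfl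
    refine Filter.eventually_of_mem (mem_nhdsWithin_of_mem_nhds hO) ?_
    rintro ⟨y', j'⟩ hj'
    have : j' = j := hj'
    rw [this]

/-- The trivialization. -/
noncomputable def triv : Bundle.Trivialization (ZMod k) (Fk f k) where
  toOpenPartialHomeomorph := phom f k c
  baseSet := U f c
  open_baseSet := isOpen_U f c
  source_eq := rfl
  target_eq := rfl
  proj_toFun p _ := rfl

/-- Points of the fiber of `Fk` over `pi f p`. -/
noncomputable def theta (p : M × ℝ) (n : ℤ) : MappingTorus (f ^ k) :=
  pi (f ^ k) ((f ^ (-n)) p.1, (p.2 + n) / k)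

lemma Fk_theta (hk : (k : ℝ) ≠ 0) (p : M × ℝ) (n : ℤ) :
    Fk f k (theta f k p n) = pi f p := by
  rw [theta, Fk_section f k _ _ _ hk]

lemma theta_eq_theta_iff (hk : (k : ℝ) ≠ 0) (p : M × ℝ) (n n' : ℤ) :
    theta f k p n = theta f k p n' ↔ ((n : ZMod k) = (n' : ZMod k)) := by
  constructor
  · intro h
    obtain ⟨m, hm⟩ := (pi_eq_iff (f ^ k)).mp h
    have h2 : (p.2 + (n' : ℝ)) / k = (p.2 + n) / k - m := congrArg Prod.snd hm
    have h3 : (n' : ℝ) = n - k * m := by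
      field_simp at h2
      linarith
    have h4 : n' = n - k * m := by exact_mod_cast h3
    rw [h4]
    push_cast
    simp
  · intro h
    have hdvd : (k : ℤ) ∣ n' - n :=
      Int.modEq_iff_dvd.mp ((ZMod.intCast_eq_intCast_iff _ _ _).mp h)
    obtain ⟨m, hm⟩ := hdvd
    refine (pi_eq_iff (f ^ k)).mpr ⟨-m, Prod.ext ?_ ?_⟩
    · show (f ^ (-n')) p.1 = ((f ^ k) ^ (-m)) ((f ^ (-n)) p.1)
      have hexp : (-n' : ℤ) = (k : ℤ) * (-m) + (-n) := by linear_combination -hm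
      rw [← zpow_natCast f k, ← zpow_mul, ← zpow_apply_add, ← hexp]
    · show (p.2 + (n' : ℝ)) / k = (p.2 + n) / k - (-m : ℤ)
      have hmr : (n' : ℝ) - n = k * m := by exact_mod_cast hm
      field_simp
      push_cast
      linarith

lemma theta_surjective (hk : (k : ℝ) ≠ 0) (p : M × ℝ) (e : MappingTorus (f ^ k))
    (he : Fk f k e = pi f p) : ∃ n : ℤ, e = theta f k p n := by
  obtain ⟨q, rfl⟩ := (isQuotientMap_pi (f ^ k)).surjective e
  rw [Fk_pi] at he
  obtain ⟨m, hm⟩ := (pi_eq_iff f).mp he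
  have h1 : p.1 = (f ^ m) q.1 := congrArg Prod.fst hm
  have h2 : p.2 = (k : ℝ) * q.2 - m := congrArg Prod.snd hm
  refine ⟨m, ?_⟩
  have hq1 : q.1 = (f ^ (-m)) p.1 := by
    rw [h1, ← zpow_apply_add]
    simp [one_apply]
  have hq2 : q.2 = (p.2 + m) / k := by
    field_simp
    linarith
  rw [theta, ← hq1, ← hq2]

end MT9

/-- Let `M` be a topological space, `f : M ≃ₜ M` a homeomorphism and
`k ≥ 1`. Then the map `T(f^k) → T(f)` induced by `(x, t) ↦ (x, k·t)` is well defined and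
is a covering map, each of whose fibers has cardinality exactly `k`. In particular, the
mapping torus of `f` is finitely covered by the mapping torus of `f^k`. -/
theorem stmt9 {M : Type*} [TopologicalSpace M] (f : M ≃ₜ M) (k : ℕ) (hk : 1 ≤ k) :
    ∃ F : MappingTorus (f ^ k) → MappingTorus f,
      (∀ (x : M) (t : ℝ), F (Quot.mk _ (x, t)) = Quot.mk _ (x, k * t)) ∧
      IsCoveringMap F ∧
      ∀ y : MappingTorus f, Nat.card (F ⁻¹' {y}) = k := by
  haveI : NeZero k := ⟨by omega⟩
  have hk0 : (k : ℝ) ≠ 0 := MT9.kR_ne_zero k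
  refine ⟨MT9.Fk f k, fun x t => rfl, ?_, ?_⟩
  · refine IsCoveringMap.mk _ (fun _ => ZMod k) (fun y => MT9.triv f k (Quot.out y).2) ?_
    intro y
    show y ∈ MT9.U f (Quot.out y).2
    set q := Quot.out y with hq
    have hy : MT9.pi f (q.1, q.2) = y := by
      rw [show (q.1, q.2) = q from rfl]
      exact Quot.out_eq y
    rw [← hy, MT9.mem_U_iff]
    refine ⟨0, ?_⟩
    constructor <;> push_cast <;> norm_num
  · intro y
    obtain ⟨p, rfl⟩ := (MT9.isQuotientMap_pi f).surjective y
    have hbij : Function.Bijective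
        (fun j : ZMod k => (⟨MT9.theta f k p (ZMod.val j : ℤ),
          MT9.Fk_theta f k hk0 p _⟩ : ↥(MT9.Fk f k ⁻¹' {MT9.pi f p}))) := by
      constructor
      · intro j j' hjj
        have h := (MT9.theta_eq_theta_iff f k hk0 p _ _).mp (congrArg Subtype.val hjj)
        rwa [MT9.val_cast_int', MT9.val_cast_int'] at h
      · rintro ⟨e, he⟩
        obtain ⟨n, rfl⟩ := MT9.theta_surjective f k hk0 p e he
        refine ⟨(n : ZMod k), Subtype.ext ?_⟩
        show MT9.theta f k p (ZMod.val ((n : ZMod k)) : ℤ) = MT9.theta f k p n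
        exact (MT9.theta_eq_theta_iff f k hk0 p _ _).mpr (MT9.val_cast_int k n)
    rw [← Nat.card_eq_of_bijective _ hbij, Nat.card_zmod]
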